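/- Let M be a real matrix, v ∈ ℝⁿ, and ε > 0 with ‖M - v vᵀ‖ ≤ ‖M‖ - ε‖v‖², where ‖·‖ denotes the spectral norm. Then if u and w are top unit left- and right-singular vectors of M (so |uᵀ M w| = ‖M‖), either ⟨u, v⟩² ≥ ε‖v‖² or ⟨w, v⟩² ≥ ε‖v‖². -/

import Mathlib

open Matrix
open scoped Kronecker

noncomputable def specNorm {m n : Type*} [Fintype m] [Fintype n] [DecidableEq n]
    (M : Matrix m n ℝ) : ℝ :=
  ‖LinearMap.toContinuousLinearMap (Matrix.toEuclideanLin M)‖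

noncomputable def frobNorm {m n : Type*} [Fintype m] [Fintype n]
    (M : Matrix m n ℝ) : ℝ :=
  Real.sqrt (∑ i, ∑ j, (M i j) ^ 2)

lemma aux_bound {n : ℕ} (A : Matrix (Fin n) (Fin n) ℝ) (u w : Fin n → ℝ)
    (hu : ∑ i, u i ^ 2 = 1) (hw : ∑ i, w i ^ 2 = 1) :
    |u ⬝ᵥ A.mulVec w| ≤ specNorm A := by
  set u' : EuclideanSpace ℝ (Fin n) := (WithLp.equiv 2 _).symm u with hu'
  set w' : EuclideanSpace ℝ (Fin n) := (WithLp.equiv 2 _).symm w with hw'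
  have hnu : ‖u'‖ = 1 := by
    rw [EuclideanSpace.norm_eq]
    simp only [hu', WithLp.equiv_symm_apply, WithLp.ofLp_toLp, Real.norm_eq_abs, sq_abs, hu, Real.sqrt_one]
  have hnw : ‖w'‖ = 1 := by
    rw [EuclideanSpace.norm_eq]
    simp only [hw', WithLp.equiv_symm_apply, WithLp.ofLp_toLp, Real.norm_eq_abs, sq_abs, hw, Real.sqrt_one]
  set T := LinearMap.toContinuousLinearMap (Matrix.toEuclideanLin A) with hT
  have key : u ⬝ᵥ A.mulVec w = (inner ℝ u' (T w') : ℝ) := by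
    have h1 : T w' = (WithLp.equiv 2 _).symm (A.mulVec w) := rfl
    rw [h1, PiLp.inner_apply]
    simp [dotProduct, RCLike.inner_apply, hu', WithLp.equiv_symm_apply, WithLp.ofLp_toLp, mul_comm]
  rw [key]
  calc |(inner ℝ u' (T w') : ℝ)| ≤ ‖u'‖ * ‖T w'‖ := abs_real_inner_le_norm _ _
    _ ≤ ‖u'‖ * (‖T‖ * ‖w'‖) := by gcongr; exact T.le_opNorm _
    _ = specNorm A := by rw [hnu, hnw]; ring_nf; rfl

/-- If subtracting `v vᵀ` decreases the spectral norm of `M` by `ε ‖v‖²`, then a top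
singular pair of `M` correlates with `v`. -/
theorem top_singular_correlation {n : ℕ} (M : Matrix (Fin n) (Fin n) ℝ)
    (v u w : Fin n → ℝ) (ε : ℝ) (hε : 0 < ε)
    (hM : specNorm (M - Matrix.vecMulVec v v) ≤ specNorm M - ε * ∑ i, v i ^ 2)
    (hu : ∑ i, u i ^ 2 = 1) (hw : ∑ i, w i ^ 2 = 1)
    (htop : |u ⬝ᵥ M.mulVec w| = specNorm M) :
    ε * (∑ i, v i ^ 2) ≤ (∑ i, u i * v i) ^ 2 ∨
      ε * (∑ i, v i ^ 2) ≤ (∑ i, w i * v i) ^ 2 := by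
  set a := ∑ i, u i * v i with ha
  set b := ∑ i, w i * v i with hb2
  have hsplit : u ⬝ᵥ (M - Matrix.vecMulVec v v).mulVec w
      = u ⬝ᵥ M.mulVec w - a * b := by
    have : u ⬝ᵥ (Matrix.vecMulVec v v).mulVec w = a * b := by
      simp only [mulVec, dotProduct, vecMulVec_apply, ha, hb2, Finset.sum_mul_sum]
      rw [Finset.sum_congr rfl fun i _ => Finset.mul_sum _ _ _]
      exact Finset.sum_congr rfl fun i _ => Finset.sum_congr rfl fun j _ => by ring
    rw [Matrix.sub_mulVec, dotProduct_sub, this]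
  have hb := aux_bound (M - Matrix.vecMulVec v v) u w hu hw
  rw [hsplit] at hb
  have h2 : |u ⬝ᵥ M.mulVec w - a * b| ≤ specNorm M - ε * ∑ i, v i ^ 2 :=
    le_trans hb hM
  have h3 : |u ⬝ᵥ M.mulVec w| - |u ⬝ᵥ M.mulVec w - a * b| ≤ |a * b| := by
    have := abs_sub_abs_le_abs_sub (u ⬝ᵥ M.mulVec w) (u ⬝ᵥ M.mulVec w - a * b)
    simpa using this
  have habs : ε * (∑ i, v i ^ 2) ≤ |a| * |b| := by
    rw [htop] at h3
    rw [← abs_mul]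
    linarith
  rcases le_total |a| |b| with h | h
  · right; nlinarith [abs_nonneg a, abs_nonneg b, sq_abs b]
  · left; nlinarith [abs_nonneg a, abs_nonneg b, sq_abs a]
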